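/- Let 0 < α ≤ 1 and β > 0, and let φ : ℝⁿ×ℝⁿ → ℝ and L : ℝⁿ×ℝⁿ×[a,b] → ℝ be of class C². Let (u,y), (ν,w) ∈ L^∞([a,b],ℝⁿ)×ℝⁿ, and set x(t) := y + ∫_a^t ((t−s)^{α−1}/Γ(α)) u(s) ds, η(t) := w + ∫_a^t ((t−s)^{α−1}/Γ(α)) ν(s) ds, and for h ∈ ℝ let 𝓛(h) := φ(x(a)+hη(a), x(b)+hη(b)) + ∫_a^b ((b−s)^{β−1}/Γ(β)) L( x(s)+hη(s), u(s)+hν(s), s ) ds. Then the limit lim_{h→0} (𝓛(h) − 𝓛(0))/h exists and equals ∂₁φ(x(a),x(b))·η(a) + ∂₂φ(x(a),x(b))·η(b) + ∫_a^b ((b−s)^{β−1}/Γ(β)) [ ∂₁L(x(s),u(s),s)·η(s) + ∂₂L(x(s),u(s),s)·ν(s) ] ds. -/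

import Mathlib

open MeasureTheory Set Filter Topology

private lemma frac_bound {n : ℕ} {a b t α C : ℝ} (hα0 : 0 < α) (hC : 0 ≤ C)
    {u : ℝ → EuclideanSpace ℝ (Fin n)}
    (hub : ∀ᵐ s ∂(volume : Measure ℝ), s ∈ Icc a b → ‖u s‖ ≤ C)
    (ht : t ∈ Icc a b) :
    ‖∫ s in a..t, ((t - s) ^ (α - 1) / Real.Gamma α) • u s‖ ≤
      C * (b - a) ^ α / (α * Real.Gamma α) := by
  obtain ⟨hat, htb⟩ := ht
  have hΓ : 0 < Real.Gamma α := Real.Gamma_pos_of_pos hα0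
  have h1 : IntervalIntegrable (fun s : ℝ => (t - s) ^ (α - 1)) volume a t := by
    have h0 := (intervalIntegral.intervalIntegrable_rpow' (a := t - a) (b := t - t)
      (show (-1:ℝ) < α - 1 by linarith)).comp_sub_left t
    simpa using h0
  have h2 : IntervalIntegrable (fun s : ℝ => (t - s) ^ (α - 1) * C / Real.Gamma α)
      volume a t := (h1.mul_const C).div_const (Real.Gamma α)
  have hae : ∀ᵐ s ∂(volume : Measure ℝ).restrict (Set.uIoc a t),
      ‖((t - s) ^ (α - 1) / Real.Gamma α) • u s‖ ≤ (t - s) ^ (α - 1) * C / Real.Gamma α := by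
    rw [Set.uIoc_of_le hat]
    refine (ae_restrict_iff' measurableSet_Ioc).2 (hub.mono fun s hs hmem => ?_)
    have hus : ‖u s‖ ≤ C := hs ⟨hmem.1.le, hmem.2.trans htb⟩
    have hpow : 0 ≤ (t - s) ^ (α - 1) := Real.rpow_nonneg (by linarith [hmem.2]) _
    rw [norm_smul, Real.norm_eq_abs, abs_div, abs_of_nonneg hpow, abs_of_pos hΓ,
      div_mul_eq_mul_div]
    gcongr
  have h3 := intervalIntegral.norm_integral_le_abs_of_norm_le hae h2
  refine h3.trans ?_
  have hval : (∫ s in a..t, (t - s) ^ (α - 1) * C / Real.Gamma α)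
      = ((t - a) ^ α / α) * C / Real.Gamma α := by
    rw [intervalIntegral.integral_div, intervalIntegral.integral_mul_const]
    congr 2
    have hcs := intervalIntegral.integral_comp_sub_left (a := a) (b := t)
      (fun x : ℝ => x ^ (α - 1)) t
    rw [hcs]
    simp only [sub_self]
    rw [integral_rpow (Or.inl (by linarith))]
    rw [sub_add_cancel, Real.zero_rpow (ne_of_gt hα0)]
    ring
  rw [hval]
  have hta : (0:ℝ) ≤ (t - a) ^ α := Real.rpow_nonneg (by linarith) _
  have hnn : 0 ≤ ((t - a) ^ α / α) * C / Real.Gamma α := by positivity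
  rw [abs_of_nonneg hnn]
  have hmono : (t - a) ^ α ≤ (b - a) ^ α :=
    Real.rpow_le_rpow (by linarith) (by linarith) hα0.le
  calc (t - a) ^ α / α * C / Real.Gamma α ≤ (b - a) ^ α / α * C / Real.Gamma α := by gcongr
    _ = C * (b - a) ^ α / (α * Real.Gamma α) := by
        field_simp

private lemma frac_meas {n : ℕ} (a α c : ℝ)
    {u : ℝ → EuclideanSpace ℝ (Fin n)} (hum : Measurable u) :
    ∃ X : ℝ → EuclideanSpace ℝ (Fin n), StronglyMeasurable X ∧
      ∀ t, a ≤ t → (∫ s in a..t, ((t - s) ^ (α - 1) / c) • u s) = X t := by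
  set g : ℝ × ℝ → EuclideanSpace ℝ (Fin n) := fun p =>
    Set.indicator {q : ℝ × ℝ | a < q.2 ∧ q.2 ≤ q.1}
      (fun q => ((q.1 - q.2) ^ (α - 1) / c) • u q.2) p with hgdef
  have hS : MeasurableSet {q : ℝ × ℝ | a < q.2 ∧ q.2 ≤ q.1} :=
    (measurableSet_lt measurable_const measurable_snd).inter
      (measurableSet_le measurable_snd measurable_fst)
  have hgm : StronglyMeasurable g := by
    refine (Measurable.indicator ?_ hS).stronglyMeasurable
    measurability
  refine ⟨fun t => ∫ s, g (t, s), hgm.integral_prod_right', fun t hat => ?_⟩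
  rw [intervalIntegral.integral_of_le hat, ← MeasureTheory.integral_indicator measurableSet_Ioc]
  congr 1

open scoped RealInnerProductSpace
open scoped Interval

private lemma meas_rpow (b r : ℝ) : Measurable (fun s : ℝ => (b - s) ^ r) := by
  fun_prop

private lemma grad_inner {F : Type*} [NormedAddCommGroup F] [InnerProductSpace ℝ F]
    [CompleteSpace F] (f : F → ℝ) (p v : F) :
    ⟪gradient f p, v⟫ = fderiv ℝ f p v := by
  simp [gradient, InnerProductSpace.toDual_symm_apply]

set_option maxHeartbeats 1000000 in
theorem stmt_4 (n : ℕ) (hn : 1 ≤ n) (a b : ℝ) (hab : a < b)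
    (α β : ℝ) (hα0 : 0 < α) (hα1 : α ≤ 1) (hβ : 0 < β)
    (φ : EuclideanSpace ℝ (Fin n) × EuclideanSpace ℝ (Fin n) → ℝ)
    (L : EuclideanSpace ℝ (Fin n) × EuclideanSpace ℝ (Fin n) × ℝ → ℝ)
    (hφ : ContDiff ℝ 2 φ) (hL : ContDiff ℝ 2 L)
    (u ν : ℝ → EuclideanSpace ℝ (Fin n)) (hum : Measurable u) (hνm : Measurable ν)
    (Cu Cν : ℝ)
    (hub : ∀ᵐ s ∂(volume : Measure ℝ), s ∈ Icc a b → ‖u s‖ ≤ Cu)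
    (hνb : ∀ᵐ s ∂(volume : Measure ℝ), s ∈ Icc a b → ‖ν s‖ ≤ Cν)
    (y w : EuclideanSpace ℝ (Fin n)) (x η : ℝ → EuclideanSpace ℝ (Fin n))
    (hx : ∀ t, x t = y + ∫ s in a..t, ((t - s) ^ (α - 1) / Real.Gamma α) • u s)
    (hη : ∀ t, η t = w + ∫ s in a..t, ((t - s) ^ (α - 1) / Real.Gamma α) • ν s)
    (𝓛 : ℝ → ℝ)
    (h𝓛 : ∀ h : ℝ, 𝓛 h = φ (x a + h • η a, x b + h • η b) +
        ∫ s in a..b, ((b - s) ^ (β - 1) / Real.Gamma β) * L (x s + h • η s, u s + h • ν s, s)) :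
    Tendsto (fun h : ℝ => (𝓛 h - 𝓛 0) / h) (𝓝[≠] (0 : ℝ))
      (𝓝 (⟪gradient (fun z => φ (z, x b)) (x a), η a⟫
        + ⟪gradient (fun z => φ (x a, z)) (x b), η b⟫
        + ∫ s in a..b, ((b - s) ^ (β - 1) / Real.Gamma β) *
            (⟪gradient (fun z => L (z, u s, s)) (x s), η s⟫
              + ⟪gradient (fun z => L (x s, z, s)) (u s), ν s⟫))) := by
  classical
  have hΓβ : 0 < Real.Gamma β := Real.Gamma_pos_of_pos hβ
  have hLd : Differentiable ℝ L := hL.differentiable (by norm_num)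
  have hφd : Differentiable ℝ φ := hφ.differentiable (by norm_num)
  set c : ℝ → ℝ := fun s => (b - s) ^ (β - 1) / Real.Gamma β with hcdef
  -- integrability and measurability of the weight
  have hcm : Measurable c := by
    rw [hcdef]; exact (meas_rpow b (β - 1)).div_const _
  have hci : IntervalIntegrable c volume a b := by
    rw [hcdef]
    have h0 := (intervalIntegral.intervalIntegrable_rpow' (a := b - a) (b := b - b)
      (show (-1:ℝ) < β - 1 by linarith)).comp_sub_left b
    have h1 : IntervalIntegrable (fun s : ℝ => (b - s) ^ (β - 1)) volume a b := by simpa using h0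
    exact h1.div_const _
  -- nonnegative essential bounds
  set Cu' := max Cu 0 with hCu'def
  set Cν' := max Cν 0 with hCν'def
  have hCu'0 : 0 ≤ Cu' := by rw [hCu'def]; exact le_max_right _ _
  have hCν'0 : 0 ≤ Cν' := by rw [hCν'def]; exact le_max_right _ _
  have hub' : ∀ᵐ s ∂(volume : Measure ℝ), s ∈ Icc a b → ‖u s‖ ≤ Cu' :=
    hub.mono fun s hs h => by rw [hCu'def]; exact (hs h).trans (le_max_left _ _)
  have hνb' : ∀ᵐ s ∂(volume : Measure ℝ), s ∈ Icc a b → ‖ν s‖ ≤ Cν' :=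
    hνb.mono fun s hs h => by rw [hCν'def]; exact (hs h).trans (le_max_left _ _)
  -- pointwise bounds on x and η
  set Kx := Cu' * (b - a) ^ α / (α * Real.Gamma α) with hKxdef
  set Kη := Cν' * (b - a) ^ α / (α * Real.Gamma α) with hKηdef
  have hxb : ∀ t ∈ Icc a b, ‖x t‖ ≤ ‖y‖ + Kx := fun t ht => by
    rw [hx t, hKxdef]
    exact (norm_add_le _ _).trans (add_le_add_right (frac_bound hα0 hCu'0 hub' ht) _)
  have hηb : ∀ t ∈ Icc a b, ‖η t‖ ≤ ‖w‖ + Kη := fun t ht => by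
    rw [hη t, hKηdef]
    exact (norm_add_le _ _).trans (add_le_add_right (frac_bound hα0 hCν'0 hνb' ht) _)
  set Rx := ‖y‖ + Kx with hRxdef
  set Rη := ‖w‖ + Kη with hRηdef
  -- measurability of x and η
  obtain ⟨X, hXm, hXeq⟩ := frac_meas a α (Real.Gamma α) hum
  obtain ⟨Y, hYm, hYeq⟩ := frac_meas a α (Real.Gamma α) hνm
  have hIoc : Ι a b = Ioc a b := Set.uIoc_of_le hab.le
  have hxm : AEStronglyMeasurable x ((volume : Measure ℝ).restrict (Ι a b)) := by
    rw [hIoc]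
    refine (((stronglyMeasurable_const : StronglyMeasurable fun _ : ℝ => y).add
      hXm).aestronglyMeasurable).congr ?_
    filter_upwards [self_mem_ae_restrict measurableSet_Ioc] with t ht
    simp only [Pi.add_apply]
    rw [hx t, hXeq t ht.1.le]
  have hηm : AEStronglyMeasurable η ((volume : Measure ℝ).restrict (Ι a b)) := by
    rw [hIoc]
    refine (((stronglyMeasurable_const : StronglyMeasurable fun _ : ℝ => w).add
      hYm).aestronglyMeasurable).congr ?_
    filter_upwards [self_mem_ae_restrict measurableSet_Ioc] with t ht
    simp only [Pi.add_apply]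
    rw [hη t, hYeq t ht.1.le]
  -- the compact set where everything lives
  set R := max (Rx + Rη) (max (Cu' + Cν') (max |a| |b|)) with hRdef
  set K := Metric.closedBall (0 : EuclideanSpace ℝ (Fin n) × EuclideanSpace ℝ (Fin n) × ℝ) R with hKdef
  have hK : IsCompact K := isCompact_closedBall _ _
  have hmem : ∀ s ∈ Icc a b, ‖u s‖ ≤ Cu' → ‖ν s‖ ≤ Cν' → ∀ h : ℝ, |h| ≤ 1 →
      ((x s + h • η s, u s + h • ν s, s) : EuclideanSpace ℝ (Fin n) × EuclideanSpace ℝ (Fin n) × ℝ) ∈ K := by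
    intro s hs hus hνs h hh
    rw [hKdef, Metric.mem_closedBall, dist_zero_right, hRdef]
    have h1 : ‖x s + h • η s‖ ≤ Rx + Rη := by
      refine (norm_add_le _ _).trans (add_le_add (hxb s hs) ?_)
      rw [norm_smul, Real.norm_eq_abs]
      calc |h| * ‖η s‖ ≤ 1 * (‖w‖ + Kη) :=
            mul_le_mul hh (hηb s hs) (norm_nonneg _) zero_le_one
        _ = Rη := by rw [one_mul, hRηdef]
    have h2 : ‖u s + h • ν s‖ ≤ Cu' + Cν' := by
      refine (norm_add_le _ _).trans (add_le_add hus ?_)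
      rw [norm_smul, Real.norm_eq_abs]
      calc |h| * ‖ν s‖ ≤ 1 * Cν' := mul_le_mul hh hνs (norm_nonneg _) zero_le_one
        _ = Cν' := by rw [one_mul]
    have h3 : |s| ≤ max |a| |b| := by
      rw [abs_le]
      constructor
      · calc -(max |a| |b|) ≤ -|a| := neg_le_neg (le_max_left _ _)
          _ ≤ a := neg_abs_le a
          _ ≤ s := hs.1
      · exact hs.2.trans ((le_abs_self b).trans (le_max_right _ _))
    have : ‖((x s + h • η s, u s + h • ν s, s) : EuclideanSpace ℝ (Fin n) × EuclideanSpace ℝ (Fin n) × ℝ)‖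
        = max ‖x s + h • η s‖ (max ‖u s + h • ν s‖ |s|) := by
      simp [Prod.norm_def, Real.norm_eq_abs]
    rw [this]
    exact max_le (h1.trans (le_max_left _ _))
      (max_le (h2.trans ((le_max_left _ _).trans (le_max_right _ _)))
        (h3.trans ((le_max_right _ _).trans (le_max_right _ _))))
  -- bounds for L and its derivative on K
  obtain ⟨M0, hM0⟩ := hK.exists_bound_of_continuousOn
    ((hL.continuous_fderiv (by norm_num)).continuousOn)
  obtain ⟨ML0, hML0⟩ := hK.exists_bound_of_continuousOn (hL.continuous.continuousOn)
  set M := max M0 0 with hMdef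
  set ML := max ML0 0 with hMLdef
  have hM : ∀ p ∈ K, ‖fderiv ℝ L p‖ ≤ M := fun p hp => by
    rw [hMdef]; exact (hM0 p hp).trans (le_max_left _ _)
  have hML : ∀ p ∈ K, |L p| ≤ ML := fun p hp => by
    rw [hMLdef]
    have h := (hML0 p hp).trans (le_max_left ML0 0); rwa [Real.norm_eq_abs] at h
  set C2 := max Rη Cν' with hC2def
  have hC2η : ∀ s ∈ Icc a b, ‖ν s‖ ≤ Cν' → ‖((η s, ν s, (0:ℝ)) : EuclideanSpace ℝ (Fin n) × EuclideanSpace ℝ (Fin n) × ℝ)‖ ≤ C2 := by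
    intro s hs hνs
    have : ‖((η s, ν s, (0:ℝ)) : EuclideanSpace ℝ (Fin n) × EuclideanSpace ℝ (Fin n) × ℝ)‖ = max ‖η s‖ (max ‖ν s‖ |(0:ℝ)|) := by
      simp [Prod.norm_def, Real.norm_eq_abs]
    rw [this, hC2def]
    refine max_le ((hηb s hs).trans (by rw [hRηdef] at *; exact le_max_left _ _))
      (max_le (hνs.trans (le_max_right _ _)) ?_)
    simp only [abs_zero]
    exact hCν'0.trans (le_max_right _ _)
  -- measurability of the integrand, for every h
  have hFmeas : ∀ h : ℝ, AEStronglyMeasurable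
      (fun s => c s * L (x s + h • η s, u s + h • ν s, s))
      ((volume : Measure ℝ).restrict (Ι a b)) := by
    intro h
    have hmap : AEStronglyMeasurable (fun s => ((x s + h • η s, u s + h • ν s, s) : EuclideanSpace ℝ (Fin n) × EuclideanSpace ℝ (Fin n) × ℝ))
        ((volume : Measure ℝ).restrict (Ι a b)) :=
      (hxm.add (hηm.const_smul h)).prodMk
        ((hum.aestronglyMeasurable.add (hνm.aestronglyMeasurable.const_smul h)).prodMk
          aestronglyMeasurable_id)
    exact hcm.aestronglyMeasurable.mul (hL.continuous.comp_aestronglyMeasurable hmap)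
  -- the dominated-derivative theorem
  have key := intervalIntegral.hasDerivAt_integral_of_dominated_loc_of_deriv_le
    (μ := (volume : Measure ℝ)) (a := a) (b := b) (x₀ := (0:ℝ)) (s := Metric.ball (0:ℝ) 1)
    (F := fun (h : ℝ) (s : ℝ) => c s * L (x s + h • η s, u s + h • ν s, s))
    (F' := fun (h : ℝ) (s : ℝ) =>
      c s * (fderiv ℝ L ((x s + h • η s, u s + h • ν s, s) : EuclideanSpace ℝ (Fin n) × EuclideanSpace ℝ (Fin n) × ℝ)) (η s, ν s, 0))
    (bound := fun s => |c s| * (M * C2))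
    (Metric.ball_mem_nhds _ zero_lt_one)
    (Filter.Eventually.of_forall fun h => hFmeas h)
    (by
      -- integrability of F 0
      rw [intervalIntegrable_iff]
      refine Integrable.mono' (g := fun s => |c s| * ML)
        ?_ (hFmeas 0) ?_
      · have := (hci.norm.mul_const ML)
        rw [intervalIntegrable_iff] at this
        simpa [Real.norm_eq_abs, IntegrableOn] using this
      · rw [hIoc]
        refine ((ae_restrict_iff' measurableSet_Ioc).2 ?_)
        filter_upwards [hub', hνb'] with s hus hνs hsmem
        have hs : s ∈ Icc a b := Ioc_subset_Icc_self hsmem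
        have hp := hmem s hs (hus hs) (hνs hs) 0 (by norm_num)
        rw [Real.norm_eq_abs, abs_mul]
        exact mul_le_mul_of_nonneg_left (hML _ hp) (abs_nonneg _))
    (by
      -- measurability of F' 0
      have hfd : Continuous (fderiv ℝ L) := hL.continuous_fderiv (by norm_num)
      have hmap0 : AEStronglyMeasurable
          (fun s => ((x s + (0:ℝ) • η s, u s + (0:ℝ) • ν s, s) : EuclideanSpace ℝ (Fin n) × EuclideanSpace ℝ (Fin n) × ℝ))
          ((volume : Measure ℝ).restrict (Ι a b)) :=
        (hxm.add (hηm.const_smul (0:ℝ))).prodMk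
          ((hum.aestronglyMeasurable.add (hνm.aestronglyMeasurable.const_smul (0:ℝ))).prodMk
            aestronglyMeasurable_id)
      have hv : AEStronglyMeasurable (fun s => ((η s, ν s, (0:ℝ)) : EuclideanSpace ℝ (Fin n) × EuclideanSpace ℝ (Fin n) × ℝ))
          ((volume : Measure ℝ).restrict (Ι a b)) :=
        hηm.prodMk (hνm.aestronglyMeasurable.prodMk aestronglyMeasurable_const)
      have happ : AEStronglyMeasurable
          (fun s => (fderiv ℝ L ((x s + (0:ℝ) • η s, u s + (0:ℝ) • ν s, s) : EuclideanSpace ℝ (Fin n) × EuclideanSpace ℝ (Fin n) × ℝ))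
            ((η s, ν s, (0:ℝ)) : EuclideanSpace ℝ (Fin n) × EuclideanSpace ℝ (Fin n) × ℝ))
          ((volume : Measure ℝ).restrict (Ι a b)) :=
        isBoundedBilinearMap_apply.continuous.comp_aestronglyMeasurable
          ((hfd.comp_aestronglyMeasurable hmap0).prodMk hv)
      exact hcm.aestronglyMeasurable.mul happ)
    (by
      -- the uniform bound
      filter_upwards [hub', hνb'] with s hus hνs hsmem h hh
      have hs : s ∈ Icc a b := Ioc_subset_Icc_self (hIoc ▸ hsmem)
      have hhb : |h| ≤ 1 := by
        rw [Metric.mem_ball, Real.dist_eq, sub_zero] at hh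
        exact hh.le
      have hp := hmem s hs (hus hs) (hνs hs) h hhb
      rw [Real.norm_eq_abs, abs_mul]
      refine mul_le_mul_of_nonneg_left ?_ (abs_nonneg _)
      calc |(fderiv ℝ L ((x s + h • η s, u s + h • ν s, s) : EuclideanSpace ℝ (Fin n) × EuclideanSpace ℝ (Fin n) × ℝ)) (η s, ν s, 0)|
          ≤ ‖fderiv ℝ L ((x s + h • η s, u s + h • ν s, s) : EuclideanSpace ℝ (Fin n) × EuclideanSpace ℝ (Fin n) × ℝ)‖
            * ‖((η s, ν s, (0:ℝ)) : EuclideanSpace ℝ (Fin n) × EuclideanSpace ℝ (Fin n) × ℝ)‖ := by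
            rw [← Real.norm_eq_abs]
            exact ContinuousLinearMap.le_opNorm _ _
        _ ≤ M * C2 := mul_le_mul (hM _ hp) (hC2η s hs (hνs hs)) (norm_nonneg _)
            ((norm_nonneg _).trans (hM _ hp)))
    (by simpa [Real.norm_eq_abs] using hci.norm.mul_const (M * C2))
    (by
      -- differentiability in h
      refine Filter.Eventually.of_forall fun s _ h _ => ?_
      have h1 : HasDerivAt (fun h : ℝ => x s + h • η s) (η s) h := by
        simpa using ((hasDerivAt_id h).smul_const (η s)).const_add (x s)
      have h2 : HasDerivAt (fun h : ℝ => u s + h • ν s) (ν s) h := by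
        simpa using ((hasDerivAt_id h).smul_const (ν s)).const_add (u s)
      have hψ : HasDerivAt (fun h : ℝ => ((x s + h • η s, u s + h • ν s, s) : EuclideanSpace ℝ (Fin n) × EuclideanSpace ℝ (Fin n) × ℝ))
          ((η s, ν s, 0)) h := h1.prodMk (h2.prodMk (hasDerivAt_const h s))
      exact ((hLd _).hasFDerivAt.comp_hasDerivAt h hψ).const_mul (c s))
  have HI := key.2
  simp only [zero_smul, add_zero] at HI
  -- derivative of the boundary term
  have h1a : HasDerivAt (fun h : ℝ => x a + h • η a) (η a) 0 := by
    simpa using ((hasDerivAt_id (0:ℝ)).smul_const (η a)).const_add (x a)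
  have h1b : HasDerivAt (fun h : ℝ => x b + h • η b) (η b) 0 := by
    simpa using ((hasDerivAt_id (0:ℝ)).smul_const (η b)).const_add (x b)
  have hψ0 : HasDerivAt (fun h : ℝ => ((x a + h • η a, x b + h • η b) : EuclideanSpace ℝ (Fin n) × EuclideanSpace ℝ (Fin n)))
      ((η a, η b)) 0 := h1a.prodMk h1b
  have HG := (hφd _).hasFDerivAt.comp_hasDerivAt 0 hψ0
  simp only [zero_smul, add_zero] at HG
  -- total derivative
  have Htot : HasDerivAt 𝓛
      ((fderiv ℝ φ ((x a, x b) : EuclideanSpace ℝ (Fin n) × EuclideanSpace ℝ (Fin n))) (η a, η b)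
        + ∫ s in a..b, c s * (fderiv ℝ L ((x s, u s, s) : EuclideanSpace ℝ (Fin n) × EuclideanSpace ℝ (Fin n) × ℝ)) (η s, ν s, 0)) 0 :=
    (HG.add HI).congr_of_eventuallyEq (Filter.Eventually.of_forall fun h => by
      simp only [hcdef]; exact h𝓛 h)
  -- rewrite the boundary derivative via gradients
  have hA : (fderiv ℝ φ ((x a, x b) : EuclideanSpace ℝ (Fin n) × EuclideanSpace ℝ (Fin n))) (η a, η b)
      = ⟪gradient (fun z => φ (z, x b)) (x a), η a⟫
        + ⟪gradient (fun z => φ (x a, z)) (x b), η b⟫ := by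
    have hfa : HasFDerivAt (fun z : EuclideanSpace ℝ (Fin n) => φ (z, x b))
        ((fderiv ℝ φ ((x a, x b) : EuclideanSpace ℝ (Fin n) × EuclideanSpace ℝ (Fin n))).comp (ContinuousLinearMap.inl ℝ (EuclideanSpace ℝ (Fin n)) (EuclideanSpace ℝ (Fin n)))) (x a) :=
      ((hφd _).hasFDerivAt).comp _ (hasFDerivAt_prodMk_left (x a) (x b))
    have hfb : HasFDerivAt (fun z : EuclideanSpace ℝ (Fin n) => φ (x a, z))
        ((fderiv ℝ φ ((x a, x b) : EuclideanSpace ℝ (Fin n) × EuclideanSpace ℝ (Fin n))).comp (ContinuousLinearMap.inr ℝ (EuclideanSpace ℝ (Fin n)) (EuclideanSpace ℝ (Fin n)))) (x b) :=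
      ((hφd _).hasFDerivAt).comp _ (hasFDerivAt_prodMk_right (x a) (x b))
    rw [grad_inner, grad_inner, hfa.fderiv, hfb.fderiv]
    have hsplit : ((η a, η b) : EuclideanSpace ℝ (Fin n) × EuclideanSpace ℝ (Fin n)) = ((η a, 0) : EuclideanSpace ℝ (Fin n) × EuclideanSpace ℝ (Fin n)) + (0, η b) := by simp
    rw [hsplit, map_add]
    simp [ContinuousLinearMap.comp_apply]
  -- rewrite the integrand via gradients
  have hB : ∀ s : ℝ, (fderiv ℝ L ((x s, u s, s) : EuclideanSpace ℝ (Fin n) × EuclideanSpace ℝ (Fin n) × ℝ)) (η s, ν s, 0)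
      = ⟪gradient (fun z => L (z, u s, s)) (x s), η s⟫
        + ⟪gradient (fun z => L (x s, z, s)) (u s), ν s⟫ := by
    intro s
    have hfa : HasFDerivAt (fun z : EuclideanSpace ℝ (Fin n) => L (z, u s, s))
        ((fderiv ℝ L ((x s, u s, s) : EuclideanSpace ℝ (Fin n) × EuclideanSpace ℝ (Fin n) × ℝ)).comp (ContinuousLinearMap.inl ℝ (EuclideanSpace ℝ (Fin n)) (EuclideanSpace ℝ (Fin n) × ℝ)))
        (x s) :=
      ((hLd _).hasFDerivAt).comp _ (hasFDerivAt_prodMk_left (x s) ((u s, s) : EuclideanSpace ℝ (Fin n) × ℝ))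
    have hfb : HasFDerivAt (fun z : EuclideanSpace ℝ (Fin n) => L (x s, z, s))
        ((fderiv ℝ L ((x s, u s, s) : EuclideanSpace ℝ (Fin n) × EuclideanSpace ℝ (Fin n) × ℝ)).comp
          ((ContinuousLinearMap.inr ℝ (EuclideanSpace ℝ (Fin n)) (EuclideanSpace ℝ (Fin n) × ℝ)).comp (ContinuousLinearMap.inl ℝ (EuclideanSpace ℝ (Fin n)) ℝ)))
        (u s) :=
      ((hLd _).hasFDerivAt).comp _
        ((hasFDerivAt_prodMk_right (x s) ((u s, s) : EuclideanSpace ℝ (Fin n) × ℝ)).comp (u s)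
          (hasFDerivAt_prodMk_left (u s) s))
    rw [grad_inner, grad_inner, hfa.fderiv, hfb.fderiv]
    have hsplit : ((η s, ν s, (0:ℝ)) : EuclideanSpace ℝ (Fin n) × EuclideanSpace ℝ (Fin n) × ℝ)
        = ((η s, 0, 0) : EuclideanSpace ℝ (Fin n) × EuclideanSpace ℝ (Fin n) × ℝ) + ((0, ν s, 0) : EuclideanSpace ℝ (Fin n) × EuclideanSpace ℝ (Fin n) × ℝ) := by simp
    rw [hsplit, map_add]
    simp [ContinuousLinearMap.comp_apply]
    rfl
  have hIeq : (fun s => c s * (fderiv ℝ L ((x s, u s, s) : EuclideanSpace ℝ (Fin n) × EuclideanSpace ℝ (Fin n) × ℝ)) (η s, ν s, 0))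
      = fun s => c s * (⟪gradient (fun z => L (z, u s, s)) (x s), η s⟫
        + ⟪gradient (fun z => L (x s, z, s)) (u s), ν s⟫) :=
    funext fun s => by rw [hB s]
  rw [hA, hIeq] at Htot
  simp only [hcdef] at Htot
  have := hasDerivAt_iff_tendsto_slope.mp Htot
  rw [show (fun h : ℝ => (𝓛 h - 𝓛 0) / h) = slope 𝓛 0 from
    funext fun h => by simp [slope_def_field] ]
  convert this using 2
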